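/- Let C be a triangulated category, let R ⊆ S be full subcategories, and let W' be the class of morphisms w such that in any triangle Z --r--> X --w--> Y --s--> ΣZ, the morphism r factors through R^⊥ and s factors through S^⊥. If f : X → Y and g∘f both belong to W', then g belongs to W'. -/

import Mathlib

open CategoryTheory CategoryTheory.Limits CategoryTheory.Pretriangulated
open CategoryTheory.Category CategoryTheory.Preadditive

variable {C : Type*} [Category C] [Preadditive C] [HasZeroObject C]
  [HasShift C ℤ] [∀ n : ℤ, Functor.Additive (CategoryTheory.shiftFunctor C n)]
  [Pretriangulated C]

/-- `f` factors through an object of the set `S`. -/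
def FactorsThruSet (S : Set C) {X Y : C} (f : X ⟶ Y) : Prop :=
  ∃ U ∈ S, ∃ (a : X ⟶ U) (b : U ⟶ Y), f = a ≫ b

/-- The right perpendicular subcategory `T^⊥` of a full subcategory `T`. -/
def rperp (T : Set C) : Set C := {Z | ∀ T' ∈ T, ∀ (f : T' ⟶ Z), f = 0}
/-- The class `W'` determined by a pair of subcategories `R`, `S`. -/
def W'class (R S : Set C) {X Y : C} (w : X ⟶ Y) : Prop :=
  ∀ (Z : C) (r : Z ⟶ X) (s : Y ⟶ Z⟦(1:ℤ)⟧),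
    (Triangle.mk r w s ∈ distTriang C) →
      FactorsThruSet (rperp R) r ∧ FactorsThruSet (rperp S) s

/-- If `R ⊆ S`, `f` and `g ∘ f` belong to `W'`, then `g` belongs to `W'`. -/
theorem W'class_of_comp_left (R S : Set C) (hRS : R ⊆ S)
    {X Y Z : C} (f : X ⟶ Y) (g : Y ⟶ Z)
    (hf : W'class R S f) (hgf : W'class R S (f ≫ g)) :
    W'class R S g := by
  intro K rr ss hTg
  -- a triangle on `f`
  obtain ⟨A₁, p₁, q₁, hT1⟩ := distinguished_cocone_triangle₁ f
  obtain ⟨-, hq₁⟩ := hf A₁ p₁ q₁ hT1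
  obtain ⟨V₁, hV₁, a₁, b₁, hab₁⟩ := hq₁
  -- a triangle on `f ≫ g`
  obtain ⟨A₂, p₂, q₂, hT2⟩ := distinguished_cocone_triangle₁ (f ≫ g)
  obtain ⟨hp₂, hq₂⟩ := hgf A₂ p₂ q₂ hT2
  obtain ⟨U₂, hU₂, α₂, β₂, hαβ₂⟩ := hp₂
  obtain ⟨V₂, hV₂, a₂, b₂, hab₂⟩ := hq₂
  -- TR3 : a morphism of triangles from the `f ≫ g` triangle to the given triangle on `g`
  obtain ⟨c, hc₁, hc₂⟩ : ∃ c : A₂⟦(1:ℤ)⟧ ⟶ K⟦(1:ℤ)⟧, q₂ ≫ c = 𝟙 Z ≫ ss ∧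
      (-p₂⟦(1:ℤ)⟧') ≫ f⟦(1:ℤ)⟧' = c ≫ (-rr⟦(1:ℤ)⟧') := complete_distinguished_triangle_morphism
    (Triangle.mk p₂ (f ≫ g) q₂).rotate (Triangle.mk rr g ss).rotate
    (rot_of_distTriang _ hT2) (rot_of_distTriang _ hTg) f (𝟙 Z)
    (by show (f ≫ g) ≫ 𝟙 Z = f ≫ g; simp)
  rw [id_comp] at hc₁
  -- hc₁ : q₂ ≫ c = ss
  have hcr : c ≫ rr⟦(1:ℤ)⟧' = (p₂ ≫ f)⟦(1:ℤ)⟧' := by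
    rw [neg_comp, comp_neg, neg_inj] at hc₂
    rw [Functor.map_comp]
    exact hc₂.symm
  have hss : ss = a₂ ≫ (b₂ ≫ c) := by rw [← assoc, ← hab₂, hc₁]
  -- the `s`-part
  refine ⟨?_, ⟨V₂, hV₂, a₂, b₂ ≫ c, hss⟩⟩
  -- the `r`-part
  -- naturality of the isomorphism `Σ⁻¹ Σ ≅ 𝟭`
  have hnat : ∀ {A B : C} (m : A ⟶ B),
      (shiftFunctorCompIsoId C (1:ℤ) (-1:ℤ) (by omega)).hom.app A ≫ m
        = ((m⟦(1:ℤ)⟧')⟦(-1:ℤ)⟧') ≫ (shiftFunctorCompIsoId C (1:ℤ) (-1:ℤ) (by omega)).hom.app B := by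
    intro A B m
    have h := (shiftFunctorCompIsoId C (1:ℤ) (-1:ℤ) (by omega)).hom.naturality m
    dsimp at h
    exact h.symm
  obtain ⟨e₂, he₂def⟩ : ∃ e₂ : V₂⟦(-1:ℤ)⟧ ⟶ K,
      e₂ = (b₂ ≫ c)⟦(-1:ℤ)⟧' ≫ (shiftFunctorCompIsoId C (1:ℤ) (-1:ℤ) (by omega)).hom.app K :=
    ⟨_, rfl⟩
  obtain ⟨κ₀, hκ₀def⟩ : ∃ κ₀ : V₂⟦(-1:ℤ)⟧ ⟶ U₂,
      κ₀ = b₂⟦(-1:ℤ)⟧' ≫ (shiftFunctorCompIsoId C (1:ℤ) (-1:ℤ) (by omega)).hom.app A₂ ≫ α₂ :=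
    ⟨_, rfl⟩
  have he₂r : e₂ ≫ rr = κ₀ ≫ (β₂ ≫ f) := by
    calc e₂ ≫ rr
        = (b₂ ≫ c)⟦(-1:ℤ)⟧'
            ≫ ((shiftFunctorCompIsoId C (1:ℤ) (-1:ℤ) (by omega)).hom.app K ≫ rr) := by
          rw [he₂def, assoc]
      _ = (b₂ ≫ c)⟦(-1:ℤ)⟧' ≫ ((rr⟦(1:ℤ)⟧')⟦(-1:ℤ)⟧'
            ≫ (shiftFunctorCompIsoId C (1:ℤ) (-1:ℤ) (by omega)).hom.app Y) := by rw [hnat rr]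
      _ = ((b₂ ≫ (c ≫ rr⟦(1:ℤ)⟧'))⟦(-1:ℤ)⟧')
            ≫ (shiftFunctorCompIsoId C (1:ℤ) (-1:ℤ) (by omega)).hom.app Y := by
          simp only [Functor.map_comp, assoc]
      _ = (b₂ ≫ (p₂ ≫ f)⟦(1:ℤ)⟧')⟦(-1:ℤ)⟧'
            ≫ (shiftFunctorCompIsoId C (1:ℤ) (-1:ℤ) (by omega)).hom.app Y := by
          rw [hcr]
      _ = b₂⟦(-1:ℤ)⟧' ≫ (((p₂ ≫ f)⟦(1:ℤ)⟧')⟦(-1:ℤ)⟧'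
            ≫ (shiftFunctorCompIsoId C (1:ℤ) (-1:ℤ) (by omega)).hom.app Y) := by
          rw [Functor.map_comp, assoc]
      _ = b₂⟦(-1:ℤ)⟧'
            ≫ ((shiftFunctorCompIsoId C (1:ℤ) (-1:ℤ) (by omega)).hom.app A₂ ≫ (p₂ ≫ f)) := by
          rw [← hnat (p₂ ≫ f)]
      _ = κ₀ ≫ (β₂ ≫ f) := by
          rw [hκ₀def, hαβ₂]
          simp only [assoc]
  -- the homotopy pushout triangle
  obtain ⟨P, σ, τ, hTP⟩ := distinguished_cocone_triangle (biprod.lift e₂ (-κ₀))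
  have hμd : biprod.lift e₂ (-κ₀) ≫ biprod.desc rr (β₂ ≫ f) = 0 := by
    rw [biprod.lift_desc, he₂r, neg_comp, add_neg_cancel]
  obtain ⟨θ, hθ⟩ : ∃ θ : P ⟶ Y, biprod.desc rr (β₂ ≫ f) = σ ≫ θ :=
    Triangle.yoneda_exact₂ _ hTP (biprod.desc rr (β₂ ≫ f)) hμd
  have hrfac : rr = (biprod.inl ≫ σ) ≫ θ := by
    rw [assoc, ← hθ, biprod.inl_desc]
  refine ⟨P, ?_, biprod.inl ≫ σ, θ, hrfac⟩
  -- it remains to show that `P` is right-perpendicular to `R`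
  intro T hT x
  have hxτ : x ≫ τ = 0 := by
    have h1 : (x ≫ τ) ≫ (shiftFunctorCompIsoId C (-1:ℤ) (1:ℤ) (by omega)).hom.app V₂ = 0 :=
      hV₂ T (hRS hT) _
    have h2 : x ≫ τ = ((x ≫ τ) ≫ (shiftFunctorCompIsoId C (-1:ℤ) (1:ℤ) (by omega)).hom.app V₂)
        ≫ (shiftFunctorCompIsoId C (-1:ℤ) (1:ℤ) (by omega)).inv.app V₂ := by simp
    rw [h2, h1, zero_comp]
  obtain ⟨w, hw⟩ : ∃ w : T ⟶ K ⊞ U₂, x = w ≫ σ := Triangle.coyoneda_exact₃ _ hTP x hxτ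
  -- every map `T ⟶ K` kills `rr`
  have hTr : ∀ (t : T ⟶ K), t ≫ rr = 0 := by
    intro t
    have h3 : (t ≫ rr) ≫ q₁ = 0 := by
      rw [hab₁, ← assoc, hV₁ T (hRS hT) ((t ≫ rr) ≫ a₁), zero_comp]
    obtain ⟨u', hu'⟩ : ∃ u' : T ⟶ X, t ≫ rr = u' ≫ f := Triangle.coyoneda_exact₃ _ hT1 (t ≫ rr) h3
    have hrg : rr ≫ g = 0 := comp_distTriang_mor_zero₁₂ _ hTg
    have h4 : u' ≫ (f ≫ g) = 0 := by
      rw [← assoc, ← hu', assoc, hrg, comp_zero]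
    obtain ⟨v, hv⟩ : ∃ v : T ⟶ A₂, u' = v ≫ p₂ := Triangle.coyoneda_exact₂ _ hT2 u' h4
    have hu0 : u' = 0 := by
      rw [hv, hαβ₂, ← assoc, hU₂ T hT (v ≫ α₂), zero_comp]
    rw [hu', hu0, zero_comp]
  -- every map `T ⟶ K` kills `biprod.inl ≫ σ`
  have hK0 : ∀ (t : T ⟶ K), t ≫ biprod.inl ≫ σ = 0 := by
    intro t
    obtain ⟨t₀, ht₀⟩ : ∃ t₀ : T ⟶ Z⟦(-1:ℤ)⟧, t = t₀ ≫
        (-(ss⟦(-1:ℤ)⟧' ≫ (shiftFunctorCompIsoId C (1:ℤ) (-1:ℤ) (by omega)).hom.app K)) :=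
      Triangle.coyoneda_exact₂ _ (inv_rot_of_distTriang _ hTg) t
      (by exact hTr t)
    have hm : (-(ss⟦(-1:ℤ)⟧' ≫ (shiftFunctorCompIsoId C (1:ℤ) (-1:ℤ) (by omega)).hom.app K))
        = -(a₂⟦(-1:ℤ)⟧' ≫ e₂) := by
      rw [hss, he₂def]
      simp only [Functor.map_comp, assoc]
    rw [hm] at ht₀
    -- ht₀ : t = t₀ ≫ -(a₂⟦-1⟧' ≫ e₂)
    have hlift : e₂ ≫ biprod.inl ≫ σ = κ₀ ≫ biprod.inr ≫ σ := by
      have h5 : biprod.lift e₂ (-κ₀) ≫ σ = 0 := comp_distTriang_mor_zero₁₂ _ hTP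
      have h6 : e₂ ≫ biprod.inl ≫ σ + -(κ₀ ≫ biprod.inr ≫ σ) = 0 := by
        rw [← h5, biprod.lift_eq]
        simp only [add_comp, neg_comp, assoc]
      exact add_neg_eq_zero.mp h6
    rw [ht₀]
    simp only [neg_comp, comp_neg, assoc]
    rw [hlift, hκ₀def]
    have h7 : t₀ ≫ a₂⟦(-1:ℤ)⟧' ≫ b₂⟦(-1:ℤ)⟧'
          ≫ (shiftFunctorCompIsoId C (1:ℤ) (-1:ℤ) (by omega)).hom.app A₂ ≫ α₂
          ≫ biprod.inr ≫ σ
        = ((t₀ ≫ a₂⟦(-1:ℤ)⟧' ≫ b₂⟦(-1:ℤ)⟧'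
            ≫ (shiftFunctorCompIsoId C (1:ℤ) (-1:ℤ) (by omega)).hom.app A₂) ≫ α₂)
          ≫ biprod.inr ≫ σ := by
      simp only [assoc]
    have h8 : (t₀ ≫ a₂⟦(-1:ℤ)⟧' ≫ b₂⟦(-1:ℤ)⟧'
        ≫ (shiftFunctorCompIsoId C (1:ℤ) (-1:ℤ) (by omega)).hom.app A₂) ≫ α₂ = 0 :=
      hU₂ T hT _
    simp only [assoc]
    rw [h7, h8, zero_comp, neg_zero]
  have hw2 : w ≫ biprod.snd = 0 := hU₂ T hT _
  have hfst : w ≫ biprod.fst ≫ biprod.inl ≫ σ = 0 := by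
    rw [← assoc]; exact hK0 _
  have hsnd : w ≫ biprod.snd ≫ biprod.inr ≫ σ = 0 := by
    rw [← assoc, hw2, zero_comp]
  rw [hw]
  have h9 : w ≫ σ = w ≫ (biprod.fst ≫ biprod.inl + biprod.snd ≫ biprod.inr) ≫ σ := by
    rw [biprod.total]; simp
  rw [h9]
  simp only [comp_add, add_comp, assoc]
  rw [hfst, hsnd, add_zero]
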